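/- For a uniformly random permutation Π of [n] and a fixed index i with 1 ≤ i ≤ n-4, the probability that the 5-tuple {i,…,i+4} is crooked equals 11/60. -/

import Mathlib

/-- The value of the permutation `π` at the (0-indexed) position `i`, as a natural
number (junk value `0` outside the range). -/
def pval {n : ℕ} (π : Equiv.Perm (Fin n)) (i : ℕ) : ℕ :=
  if h : i < n then (π ⟨i, h⟩).val else 0

/-- Position `i` (0-indexed) is extremal in `π`: it is an endpoint, or a strict local
maximum, or a strict local minimum. -/
def IsExtremal {n : ℕ} (π : Equiv.Perm (Fin n)) (i : ℕ) : Prop :=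
  i < n ∧ (i = 0 ∨ i = n - 1 ∨
    (pval π (i - 1) < pval π i ∧ pval π (i + 1) < pval π i) ∨
    (pval π i < pval π (i - 1) ∧ pval π i < pval π (i + 1)))

instance {n : ℕ} (π : Equiv.Perm (Fin n)) : DecidablePred (IsExtremal π) := fun i => by
  unfold IsExtremal; infer_instance

/-- `e(π)`: the number of extremal points of `π`. -/
def extremalCount {n : ℕ} (π : Equiv.Perm (Fin n)) : ℕ :=
  ((Finset.range n).filter (IsExtremal π)).card
/-- `f i, f (i+1), f (i+2)` is strictly monotone. -/
def Mono3 (f : ℕ → ℕ) (i : ℕ) : Prop :=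
  (f i < f (i + 1) ∧ f (i + 1) < f (i + 2)) ∨ (f (i + 2) < f (i + 1) ∧ f (i + 1) < f i)

/-- `f i, …, f (i+3)` is strictly monotone. -/
def Mono4 (f : ℕ → ℕ) (i : ℕ) : Prop :=
  (f i < f (i + 1) ∧ f (i + 1) < f (i + 2) ∧ f (i + 2) < f (i + 3)) ∨
  (f (i + 3) < f (i + 2) ∧ f (i + 2) < f (i + 1) ∧ f (i + 1) < f i)

/-- `f i, …, f (i+4)` is strictly monotone. -/
def Mono5 (f : ℕ → ℕ) (i : ℕ) : Prop :=
  (f i < f (i + 1) ∧ f (i + 1) < f (i + 2) ∧ f (i + 2) < f (i + 3) ∧ f (i + 3) < f (i + 4)) ∨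
  (f (i + 4) < f (i + 3) ∧ f (i + 3) < f (i + 2) ∧ f (i + 2) < f (i + 1) ∧ f (i + 1) < f i)

/-- The 5-tuple of consecutive positions `i, …, i+4` is cornered: the first four or the
last four values are monotone, but all five are not. -/
def Cornered {n : ℕ} (π : Equiv.Perm (Fin n)) (i : ℕ) : Prop :=
  (Mono4 (pval π) i ∨ Mono4 (pval π) (i + 1)) ∧ ¬ Mono5 (pval π) i

/-- The 5-tuple of consecutive positions `i, …, i+4` is crooked: the middle three values
are monotone, but no four consecutive values are. -/
def Crooked {n : ℕ} (π : Equiv.Perm (Fin n)) (i : ℕ) : Prop :=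
  Mono3 (pval π) (i + 1) ∧ ¬ Mono4 (pval π) i ∧ ¬ Mono4 (pval π) (i + 1)

instance {n : ℕ} (π : Equiv.Perm (Fin n)) : DecidablePred (Cornered π) := fun i => by
  unfold Cornered Mono4 Mono5; infer_instance

instance {n : ℕ} (π : Equiv.Perm (Fin n)) : DecidablePred (Crooked π) := fun i => by
  unfold Crooked Mono3 Mono4; infer_instance

/-- `co(π)`: the number of cornered 5-tuples of consecutive positions of `π`. -/
def corneredCount {n : ℕ} (π : Equiv.Perm (Fin n)) : ℕ :=
  ((Finset.range (n - 4)).filter (Cornered π)).card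

/-- `cr(π)`: the number of crooked 5-tuples of consecutive positions of `π`. -/
def crookedCount {n : ℕ} (π : Equiv.Perm (Fin n)) : ℕ :=
  ((Finset.range (n - 4)).filter (Crooked π)).card
section Stmt10Aux

open Finset Equiv

variable {n i : ℕ}

/-- Embedding of window positions. -/
def win (h : i + 5 ≤ n) : Fin 5 ↪ Fin n :=
  ⟨fun j => ⟨i + j, by omega⟩, fun a b hab => by
    simp only [Fin.mk.injEq] at hab
    exact Fin.ext (by omega)⟩

/-- Rank of the value at window position `j`. -/
def patF (h : i + 5 ≤ n) (π : Equiv.Perm (Fin n)) (j : Fin 5) : Fin 5 :=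
  ⟨(Finset.univ.filter (fun k : Fin 5 => pval π (i + k) < pval π (i + j))).card, by
    have hsub : (Finset.univ.filter (fun k : Fin 5 => pval π (i + k) < pval π (i + j)))
        ⊆ Finset.univ.erase j := by
      intro k hk
      simp only [Finset.mem_filter] at hk
      refine Finset.mem_erase.mpr ⟨?_, Finset.mem_univ _⟩
      rintro rfl; exact lt_irrefl _ hk.2
    have h1 := Finset.card_le_card hsub
    have h2 : (Finset.univ.erase j).card = 4 := by
      rw [Finset.card_erase_of_mem (Finset.mem_univ _)]; simp
    omega⟩

lemma pval_win (h : i + 5 ≤ n) (π : Equiv.Perm (Fin n)) {a : ℕ} (ha : a ≤ 4) :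
    pval π (i + a) = (π ⟨i + a, by omega⟩).val := by
  unfold pval; rw [dif_pos]

lemma pval_inj (h : i + 5 ≤ n) (π : Equiv.Perm (Fin n)) {a b : ℕ} (ha : a ≤ 4) (hb : b ≤ 4)
    (hv : pval π (i + a) = pval π (i + b)) : a = b := by
  rw [pval_win h π ha, pval_win h π hb] at hv
  have := π.injective (Fin.ext hv)
  simp only [Fin.mk.injEq] at this
  omega

lemma patF_lt_of (h : i + 5 ≤ n) (π : Equiv.Perm (Fin n)) {a b : Fin 5}
    (hv : pval π (i + a) < pval π (i + b)) : patF h π a < patF h π b := by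
  show (Finset.univ.filter (fun k : Fin 5 => pval π (i + k) < pval π (i + a))).card <
    (Finset.univ.filter (fun k : Fin 5 => pval π (i + k) < pval π (i + b))).card
  apply Finset.card_lt_card
  constructor
  · intro k hk
    simp only [Finset.mem_filter] at hk ⊢
    exact ⟨hk.1, hk.2.trans hv⟩
  · intro hc
    have ha : a ∈ Finset.univ.filter (fun k : Fin 5 => pval π (i + k) < pval π (i + b)) := by
      simp only [Finset.mem_filter]; exact ⟨Finset.mem_univ _, hv⟩
    have := hc ha
    simp only [Finset.mem_filter] at this
    exact lt_irrefl _ this.2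

lemma patF_lt_iff (h : i + 5 ≤ n) (π : Equiv.Perm (Fin n)) (a b : Fin 5) :
    patF h π a < patF h π b ↔ pval π (i + a) < pval π (i + b) := by
  constructor
  · intro hp
    rcases lt_trichotomy (pval π (i + a)) (pval π (i + b)) with hv | hv | hv
    · exact hv
    · have : (a : ℕ) = b := pval_inj h π (by omega) (by omega) hv
      have : a = b := Fin.ext this
      subst this; exact absurd hp (lt_irrefl _)
    · exact absurd (patF_lt_of h π hv) (by omega)
  · exact patF_lt_of h π

lemma patF_injective (h : i + 5 ≤ n) (π : Equiv.Perm (Fin n)) :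
    Function.Injective (patF h π) := by
  intro a b hab
  rcases lt_trichotomy (pval π (i + a)) (pval π (i + b)) with hv | hv | hv
  · have := patF_lt_of h π hv; omega
  · exact Fin.ext (pval_inj h π (by omega) (by omega) hv)
  · have := patF_lt_of h π hv; omega

/-- The pattern of `π` on the window, as a permutation of `Fin 5`. -/
noncomputable def patPerm (h : i + 5 ≤ n) (π : Equiv.Perm (Fin n)) : Equiv.Perm (Fin 5) :=
  Equiv.ofBijective (patF h π) (Finite.injective_iff_bijective.mp (patF_injective h π))

lemma patPerm_apply (h : i + 5 ≤ n) (π : Equiv.Perm (Fin n)) (j : Fin 5) :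
    patPerm h π j = patF h π j := rfl

end Stmt10Aux
section Stmt10Aux2

open Finset Equiv

variable {n i : ℕ}

lemma pval_mul_via (h : i + 5 ≤ n) (π : Equiv.Perm (Fin n)) (σ : Equiv.Perm (Fin 5))
    (k : Fin 5) :
    pval (π * σ.viaEmbedding (win h)) (i + k) = pval π (i + σ k) := by
  rw [pval_win h _ (by omega), pval_win h _ (by omega)]
  have : (⟨i + (k : ℕ), by omega⟩ : Fin n) = win h k := rfl
  rw [this, Equiv.Perm.mul_apply, Equiv.Perm.viaEmbedding_apply]
  rfl

lemma patPerm_mul (h : i + 5 ≤ n) (π : Equiv.Perm (Fin n)) (σ : Equiv.Perm (Fin 5)) :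
    patPerm h (π * σ.viaEmbedding (win h)) = patPerm h π * σ := by
  apply Equiv.ext
  intro j
  rw [patPerm_apply, Equiv.Perm.mul_apply, patPerm_apply]
  apply Fin.ext
  show (Finset.univ.filter (fun k : Fin 5 =>
      pval (π * σ.viaEmbedding (win h)) (i + k) < pval (π * σ.viaEmbedding (win h)) (i + j))).card
    = (Finset.univ.filter (fun k : Fin 5 => pval π (i + k) < pval π (i + σ j))).card
  simp only [pval_mul_via h π σ]
  apply Finset.card_bij (fun k _ => σ k)
  · intro k hk
    simp only [Finset.mem_filter] at hk ⊢
    exact ⟨Finset.mem_univ _, hk.2⟩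
  · intro a ha b hb hab
    exact σ.injective hab
  · intro m hm
    refine ⟨σ.symm m, ?_, by simp⟩
    simp only [Finset.mem_filter] at hm ⊢
    refine ⟨Finset.mem_univ _, ?_⟩
    simpa using hm.2

end Stmt10Aux2
section Stmt10Aux3

open Finset Equiv

variable {n i : ℕ}

lemma key_lt (h : i + 5 ≤ n) (π : Equiv.Perm (Fin n)) {a b : ℕ} (ha : a ≤ 4) (hb : b ≤ 4) :
    pval π (i + a) < pval π (i + b) ↔
      pval (patPerm h π) a < pval (patPerm h π) b := by
  have H := patF_lt_iff h π ⟨a, by omega⟩ ⟨b, by omega⟩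
  rw [Fin.lt_def] at H
  have e1 : pval (patPerm h π) a = (patF h π ⟨a, by omega⟩ : Fin 5).val := by
    unfold pval; rw [dif_pos (show a < 5 by omega)]; rfl
  have e2 : pval (patPerm h π) b = (patF h π ⟨b, by omega⟩ : Fin 5).val := by
    unfold pval; rw [dif_pos (show b < 5 by omega)]; rfl
  rw [e1, e2]
  exact H.symm

lemma crooked_iff_pat (h : i + 5 ≤ n) (π : Equiv.Perm (Fin n)) :
    Crooked π i ↔ Crooked (patPerm h π) 0 := by
  have K : ∀ a b : ℕ, a ≤ 4 → b ≤ 4 →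
      (pval π (i + a) < pval π (i + b) ↔ pval (patPerm h π) a < pval (patPerm h π) b) :=
    fun a b ha hb => key_lt h π ha hb
  have h01 : pval π i < pval π (i + 1) ↔ pval (patPerm h π) 0 < pval (patPerm h π) 1 := by simpa using K 0 1 (by omega) (by omega)
  have h10 : pval π (i + 1) < pval π i ↔ pval (patPerm h π) 1 < pval (patPerm h π) 0 := by simpa using K 1 0 (by omega) (by omega)
  have h12 : pval π (i + 1) < pval π (i + 2) ↔ pval (patPerm h π) 1 < pval (patPerm h π) 2 := K 1 2 (by omega) (by omega)
  have h21 : pval π (i + 2) < pval π (i + 1) ↔ pval (patPerm h π) 2 < pval (patPerm h π) 1 := K 2 1 (by omega) (by omega)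
  have h23 : pval π (i + 2) < pval π (i + 3) ↔ pval (patPerm h π) 2 < pval (patPerm h π) 3 := K 2 3 (by omega) (by omega)
  have h32 : pval π (i + 3) < pval π (i + 2) ↔ pval (patPerm h π) 3 < pval (patPerm h π) 2 := K 3 2 (by omega) (by omega)
  have h34 : pval π (i + 3) < pval π (i + 4) ↔ pval (patPerm h π) 3 < pval (patPerm h π) 4 := K 3 4 (by omega) (by omega)
  have h43 : pval π (i + 4) < pval π (i + 3) ↔ pval (patPerm h π) 4 < pval (patPerm h π) 3 := K 4 3 (by omega) (by omega)
  unfold Crooked Mono3 Mono4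
  simp only [show i + 1 + 1 = i + 2 from by omega, show i + 1 + 2 = i + 3 from by omega,
    show i + 1 + 3 = i + 4 from by omega]
  simp only [Nat.reduceAdd, Nat.zero_add, Nat.add_zero]
  rw [h01, h10, h12, h21, h23, h32, h34, h43]

end Stmt10Aux3
section Stmt10Final

open Finset Equiv

lemma via_mul {n i : ℕ} (h : i + 5 ≤ n) (σ τ : Equiv.Perm (Fin 5)) :
    σ.viaEmbedding (win h) * τ.viaEmbedding (win h) = (σ * τ).viaEmbedding (win h) := by
  rw [← Equiv.Perm.viaEmbeddingHom_apply, ← Equiv.Perm.viaEmbeddingHom_apply,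
    ← Equiv.Perm.viaEmbeddingHom_apply, map_mul]

lemma fib_card {n i : ℕ} (h : i + 5 ≤ n) (σ : Equiv.Perm (Fin 5)) :
    (Finset.univ.filter (fun π : Equiv.Perm (Fin n) => patPerm h π = σ)).card =
      (Finset.univ.filter (fun π : Equiv.Perm (Fin n) => patPerm h π = 1)).card := by
  classical
  apply Finset.card_bij' (fun π _ => π * (σ⁻¹).viaEmbedding (win h))
    (fun π _ => π * σ.viaEmbedding (win h))
  · intro π hπ
    simp only [Finset.mem_filter] at hπ ⊢
    refine ⟨Finset.mem_univ _, ?_⟩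
    rw [patPerm_mul, hπ.2, mul_inv_cancel]
  · intro π hπ
    simp only [Finset.mem_filter] at hπ ⊢
    refine ⟨Finset.mem_univ _, ?_⟩
    rw [patPerm_mul, hπ.2, one_mul]
  · intro π hπ
    rw [mul_assoc, via_mul, inv_mul_cancel, ← Equiv.Perm.viaEmbeddingHom_apply, map_one, mul_one]
  · intro π hπ
    rw [mul_assoc, via_mul, mul_inv_cancel, ← Equiv.Perm.viaEmbeddingHom_apply, map_one, mul_one]

set_option maxRecDepth 40000

/-- The probability that a fixed 5-tuple of consecutive positions of a uniformly random
permutation is crooked equals `11/60`. -/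
theorem stmt_10 (n i : ℕ) (h : i + 5 ≤ n) :
    60 * Nat.card {π : Equiv.Perm (Fin n) | Crooked π i} =
      11 * Nat.card (Equiv.Perm (Fin n)) := by
  classical
  have hset : Nat.card {π : Equiv.Perm (Fin n) | Crooked π i}
      = (Finset.univ.filter (fun π : Equiv.Perm (Fin n) => Crooked π i)).card := by
    rw [Nat.card_eq_fintype_card]
    simp [Fintype.card_subtype]
  have hfib := fib_card (n := n) (i := i) h
  have htot : Fintype.card (Equiv.Perm (Fin n)) =
      120 * (Finset.univ.filter (fun π : Equiv.Perm (Fin n) => patPerm h π = 1)).card := by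
    rw [← Finset.card_univ,
      Finset.card_eq_sum_card_fiberwise (f := patPerm h) (t := Finset.univ)
        (fun x _ => Finset.mem_univ _)]
    have h120 : (Finset.univ : Finset (Equiv.Perm (Fin 5))).card = 120 := by
      rw [Finset.card_univ, Fintype.card_perm, Fintype.card_fin]; rfl
    rw [Finset.sum_congr rfl (fun σ _ => hfib σ), Finset.sum_const, smul_eq_mul, h120]
  have hA : (Finset.univ.filter (fun π : Equiv.Perm (Fin n) => Crooked π i)).card
      = 22 * (Finset.univ.filter (fun π : Equiv.Perm (Fin n) => patPerm h π = 1)).card := by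
    have hfe : Finset.univ.filter (fun π : Equiv.Perm (Fin n) => Crooked π i)
        = Finset.univ.filter (fun π => Crooked (patPerm h π) 0) :=
      Finset.filter_congr (fun π _ => crooked_iff_pat h π)
    rw [hfe]
    rw [Finset.card_eq_sum_card_fiberwise (f := patPerm h)
      (t := Finset.univ.filter (fun σ : Equiv.Perm (Fin 5) => Crooked σ 0))
      (fun π hπ => by
        simp only [Finset.mem_coe, Finset.mem_filter] at hπ ⊢
        exact ⟨Finset.mem_univ _, hπ.2⟩)]
    have hstep : ∀ σ ∈ Finset.univ.filter (fun σ : Equiv.Perm (Fin 5) => Crooked σ 0),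
        ((Finset.univ.filter (fun π : Equiv.Perm (Fin n) => Crooked (patPerm h π) 0)).filter
          (fun π => patPerm h π = σ)).card
        = (Finset.univ.filter (fun π : Equiv.Perm (Fin n) => patPerm h π = 1)).card := by
      intro σ hσ
      simp only [Finset.mem_filter] at hσ
      rw [Finset.filter_filter]
      have : Finset.univ.filter
            (fun π : Equiv.Perm (Fin n) => Crooked (patPerm h π) 0 ∧ patPerm h π = σ)
          = Finset.univ.filter (fun π => patPerm h π = σ) :=
        Finset.filter_congr (fun π _ => by
          constructor
          · exact fun hx => hx.2
          · intro hx; exact ⟨by rw [hx]; exact hσ.2, hx⟩)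
      rw [this, hfib]
    have hS : (Finset.univ.filter (fun σ : Equiv.Perm (Fin 5) => Crooked σ 0)).card = 22 := by
      decide
    rw [Finset.sum_congr rfl hstep, Finset.sum_const, smul_eq_mul, hS]
  rw [hset, hA, Nat.card_eq_fintype_card, htot]
  ring

end Stmt10Final
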